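/- Let F, G be distribution functions and t ∈ (0,1) not a generalized contact point of F⁻¹ and G⁻¹. Then sgn(t - F(G⁻¹(t))) = sgn(F⁻¹(t) - G⁻¹(t)), and in particular t ≠ F(G⁻¹(t)). -/

import Mathlib

open Set Filter MeasureTheory

/-- `quantile F t = inf {x | t ≤ F x}` is the (left-continuous) quantile function of `F`. -/
noncomputable def quantile (F : ℝ → ℝ) (t : ℝ) : ℝ := sInf {x | t ≤ F x}

/-- `F` is a distribution function: nondecreasing, right-continuous, with limits
`0` at `-∞` and `1` at `+∞`. -/
def IsDistFun (F : ℝ → ℝ) : Prop :=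
  Monotone F ∧ (∀ x, ContinuousWithinAt F (Set.Ici x) x) ∧
    Tendsto F atBot (nhds 0) ∧ Tendsto F atTop (nhds 1)

/-- `t` is a generalized contact point between the quantile functions of `F` and `G`. -/
noncomputable def ContactPoint (F G : ℝ → ℝ) (t : ℝ) : Prop :=
  quantile F t = quantile G t ∨
    (quantile F t < quantile G t ∧ quantile G t ≤ Function.rightLim (quantile F) t) ∨
    (quantile G t < quantile F t ∧ quantile F t ≤ Function.rightLim (quantile G) t)

/-- If `t ∈ (0,1)` is not a generalized contact point, then
`sgn (t - F(G⁻¹(t))) = sgn (F⁻¹(t) - G⁻¹(t))`; in particular `t ≠ F(G⁻¹(t))`. -/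
lemma quantile_set_nonempty (F : ℝ → ℝ) (hF : IsDistFun F) {t : ℝ} (ht : t < 1) :
    {x | t ≤ F x}.Nonempty := by
  obtain ⟨x, hx⟩ := (hF.2.2.2.eventually_const_lt ht).exists
  exact ⟨x, hx.le⟩

lemma quantile_set_bddBelow (F : ℝ → ℝ) (hF : IsDistFun F) {t : ℝ} (ht : 0 < t) :
    BddBelow {x | t ≤ F x} := by
  obtain ⟨x₀, hx₀⟩ := eventually_atBot.mp (hF.2.2.1.eventually_lt_const ht)
  refine ⟨x₀, fun y hy => ?_⟩
  by_contra hyx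
  push_neg at hyx
  exact absurd (hy.trans (hF.1 hyx.le)) (not_le.mpr (hx₀ x₀ le_rfl))

lemma le_apply_quantile (F : ℝ → ℝ) (hF : IsDistFun F) {t : ℝ} (ht : t ∈ Set.Ioo (0:ℝ) 1) :
    t ≤ F (quantile F t) := by
  by_contra h
  push_neg at h
  have hev : ∀ᶠ x in nhdsWithin (quantile F t) (Set.Ici (quantile F t)), F x < t :=
    (hF.2.1 (quantile F t)).eventually_lt_const h
  obtain ⟨u, hu, hall⟩ := (nhdsGE_basis_Ico (quantile F t)).eventually_iff.mp hev
  have hlb : ∀ y ∈ {x | t ≤ F x}, u ≤ y := by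
    intro y hy
    by_contra hyu
    push_neg at hyu
    rcases lt_or_ge y (quantile F t) with h1 | h1
    · exact absurd (csInf_le (quantile_set_bddBelow F hF ht.1) hy) (not_le.mpr h1)
    · exact absurd hy (not_le.mpr (hall ⟨h1, hyu⟩))
  have := le_csInf (quantile_set_nonempty F hF ht.2) hlb
  exact absurd this (not_le.mpr hu)

lemma quantile_le_of_le (F : ℝ → ℝ) (hF : IsDistFun F) {t x : ℝ} (ht : 0 < t)
    (h : t ≤ F x) : quantile F t ≤ x :=
  csInf_le (quantile_set_bddBelow F hF ht) h

lemma le_of_quantile_le (F : ℝ → ℝ) (hF : IsDistFun F) {t x : ℝ} (ht : t ∈ Set.Ioo (0:ℝ) 1)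
    (h : quantile F t ≤ x) : t ≤ F x :=
  (le_apply_quantile F hF ht).trans (hF.1 h)

theorem sign_eq_of_not_contact (F G : ℝ → ℝ) (hF : IsDistFun F) (hG : IsDistFun G)
    (t : ℝ) (ht : t ∈ Set.Ioo (0:ℝ) 1) (hnc : ¬ ContactPoint F G t) :
    Real.sign (t - F (quantile G t)) = Real.sign (quantile F t - quantile G t) ∧
      t ≠ F (quantile G t) := by
  rcases lt_trichotomy (quantile F t) (quantile G t) with hlt | heq | hgt
  · -- quantile F t < quantile G t : show t < F (quantile G t)
    have h1 : t ≤ F (quantile G t) := le_of_quantile_le F hF ht hlt.le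
    have hne : t ≠ F (quantile G t) := by
      intro he
      -- for s ∈ (t,1), quantile F s > quantile G t
      have hgtq : ∀ s ∈ Set.Ioo t 1, quantile G t < quantile F s := by
        intro s hs
        by_contra hle
        push_neg at hle
        have hs' : s ∈ Set.Ioo (0:ℝ) 1 := ⟨ht.1.trans hs.1, hs.2⟩
        have : s ≤ F (quantile G t) := le_of_quantile_le F hF hs' hle
        rw [← he] at this
        exact absurd hs.1 (not_lt.mpr this)
      have hne' : (Set.Ioo t 1).Nonempty := Set.nonempty_Ioo.mpr ht.2
      have hmono : MonotoneOn (quantile F) (Set.Ioo t 1) := by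
        intro a ha b hb hab
        exact csInf_le_csInf (quantile_set_bddBelow F hF (ht.1.trans ha.1))
          (quantile_set_nonempty F hF hb.2) (fun x hx => le_trans hab hx)
      have hbdd : BddBelow (quantile F '' Set.Ioo t 1) := by
        refine ⟨quantile G t, fun y hy => ?_⟩
        obtain ⟨s, hs, rfl⟩ := hy
        exact (hgtq s hs).le
      have htend := MonotoneOn.tendsto_nhdsWithin_Ioo_right hne' hmono hbdd
      have hR : Function.rightLim (quantile F) t = sInf (quantile F '' Set.Ioo t 1) :=
        rightLim_eq_of_tendsto htend
      have hge : quantile G t ≤ Function.rightLim (quantile F) t := by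
        rw [hR]
        refine le_csInf (hne'.image _) ?_
        rintro y ⟨s, hs, rfl⟩
        exact (hgtq s hs).le
      exact hnc (Or.inr (Or.inl ⟨hlt, hge⟩))
    have h2 : t < F (quantile G t) := h1.lt_of_ne hne
    refine ⟨?_, hne⟩
    rw [Real.sign_of_neg (by linarith), Real.sign_of_neg (by linarith)]
  · exact absurd (Or.inl heq) hnc
  · -- quantile G t < quantile F t : show F (quantile G t) < t
    have h2 : F (quantile G t) < t := by
      by_contra h
      push_neg at h
      exact absurd (quantile_le_of_le F hF ht.1 h) (not_le.mpr hgt)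
    refine ⟨?_, h2.ne'⟩
    rw [Real.sign_of_pos (by linarith), Real.sign_of_pos (by linarith)]
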